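/- For every natural number k ≥ 1, the group defined by the presentation ⟨d, t | dᵏ = 1, t²dtd⁻¹t⁻¹d = 1⟩ is finite of order 2k(1 + 4 + 4² + ⋯ + 4^{k−1}) = 2k(4ᵏ − 1)/3. -/

import Mathlib

/-- Relators for the presentation `⟨d, t | dᵏ, t²dtd⁻¹t⁻¹d⟩`,
with generators `d = 0`, `t = 1`. -/
def relsDT' (k : ℕ) : Set (FreeGroup (Fin 2)) :=
  let d : FreeGroup (Fin 2) := FreeGroup.of 0
  let t : FreeGroup (Fin 2) := FreeGroup.of 1
  {d ^ k, t ^ 2 * d * t * d⁻¹ * t⁻¹ * d}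

namespace CardDT

/-! ### Abstract consequences of the relations, valid in any group -/

theorem conj_id {G : Type*} [Group G] (d t : G) :
    (d * t ^ 2) ^ 2 * (t * (d * t ^ 2) * t⁻¹)⁻¹ =
      d * (t ^ 2 * d * t * d⁻¹ * t⁻¹ * d) * d⁻¹ := by
  rw [sq (d * t ^ 2)]
  group

theorem key_of_rel {G : Type*} [Group G] {d t : G}
    (h : t ^ 2 * d * t * d⁻¹ * t⁻¹ * d = 1) :
    t * (d * t ^ 2) * t⁻¹ = (d * t ^ 2) ^ 2 := by
  have h1 := conj_id d t
  rw [h, mul_one, mul_inv_cancel] at h1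
  exact (mul_inv_eq_one.mp h1).symm

theorem rel_of_key {G : Type*} [Group G] {d t : G}
    (h : t * (d * t ^ 2) * t⁻¹ = (d * t ^ 2) ^ 2) :
    t ^ 2 * d * t * d⁻¹ * t⁻¹ * d = 1 := by
  have h1 := conj_id d t
  rw [h, mul_inv_cancel] at h1
  have h2 : t ^ 2 * d * t * d⁻¹ * t⁻¹ * d
      = d⁻¹ * (d * (t ^ 2 * d * t * d⁻¹ * t⁻¹ * d) * d⁻¹) * d := by group
  rw [h2, ← h1]
  group

/-- If `tet⁻¹ = e²` then `tʲeⁿ = e^(2ʲn) tʲ`. -/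
theorem t_pow_mul_e_pow {G : Type*} [Group G] {e t : G}
    (h : t * e * t⁻¹ = e ^ 2) (j n : ℕ) :
    t ^ j * e ^ n = e ^ (2 ^ j * n) * t ^ j := by
  have h1 : ∀ n : ℕ, t * e ^ n = e ^ (2 * n) * t := by
    intro n
    have h2 : t * e ^ n = (t * e * t⁻¹) ^ n * t := by rw [conj_pow]; group
    rw [h2, h, ← pow_mul]
  induction j generalizing n with
  | zero => simp
  | succ j ih =>
    calc t ^ (j + 1) * e ^ n = t ^ j * (t * e ^ n) := by rw [pow_succ]; group
      _ = t ^ j * (e ^ (2 * n) * t) := by rw [h1]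
      _ = (t ^ j * e ^ (2 * n)) * t := by group
      _ = (e ^ (2 ^ j * (2 * n)) * t ^ j) * t := by rw [ih]
      _ = e ^ (2 ^ (j + 1) * n) * t ^ (j + 1) := by
          rw [mul_assoc, ← pow_succ]
          congr 2
          ring

/-- If `e = dt²` and `tet⁻¹ = e²` then `t^(2j) dʲ = e^(4·(1+4+⋯+4^(j-1)))`. -/
theorem t_pow_mul_d_pow {G : Type*} [Group G] {d t e : G}
    (he : e = d * t ^ 2) (h : t * e * t⁻¹ = e ^ 2) (j : ℕ) :
    t ^ (2 * j) * d ^ j = e ^ (4 * ∑ i ∈ Finset.range j, 4 ^ i) := by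
  have hd : t ^ 2 * d = e ^ 4 := by
    have h2 : t ^ 2 * e = e ^ (2 ^ 2 * 1) * t ^ 2 := by
      have h3 := t_pow_mul_e_pow h 2 1
      rwa [pow_one e] at h3
    calc t ^ 2 * d = (t ^ 2 * e) * (t ^ 2)⁻¹ := by rw [he]; group
      _ = (e ^ (2 ^ 2 * 1) * t ^ 2) * (t ^ 2)⁻¹ := by rw [h2]
      _ = e ^ 4 := by rw [mul_inv_cancel_right]; norm_num
  induction j with
  | zero => simp
  | succ j ih =>
    calc t ^ (2 * (j + 1)) * d ^ (j + 1)
        = t ^ (2 * j) * ((t ^ 2 * d) * d ^ j) := by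
          rw [pow_succ' d, show 2 * (j + 1) = 2 * j + 2 by ring, pow_add]
          group
      _ = t ^ (2 * j) * (e ^ 4 * d ^ j) := by rw [hd]
      _ = (t ^ (2 * j) * e ^ 4) * d ^ j := by group
      _ = (e ^ (2 ^ (2 * j) * 4) * t ^ (2 * j)) * d ^ j := by rw [t_pow_mul_e_pow h]
      _ = e ^ (2 ^ (2 * j) * 4) * (t ^ (2 * j) * d ^ j) := by group
      _ = e ^ (2 ^ (2 * j) * 4) * e ^ (4 * ∑ i ∈ Finset.range j, 4 ^ i) := by rw [ih]
      _ = e ^ (4 * ∑ i ∈ Finset.range (j + 1), 4 ^ i) := by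
          rw [← pow_add, Finset.sum_range_succ]
          congr 1
          rw [pow_mul]
          ring

/-- `g^q = 1 → g^(x % q) = g^x`. -/
theorem pow_mod_eq {M : Type*} [Monoid M] {g : M} {q : ℕ} (h : g ^ q = 1) (x : ℕ) :
    g ^ (x % q) = g ^ x := by
  conv_rhs => rw [← Nat.mod_add_div x q]
  rw [pow_add, pow_mul, h, one_pow, mul_one]

/-! ### Numerics -/

/-- `m k = 1 + 4 + ⋯ + 4^(k-1)`. -/
def m (k : ℕ) : ℕ := ∑ i ∈ Finset.range k, 4 ^ i

theorem geom (k : ℕ) : 3 * m k + 1 = 4 ^ k := by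
  induction k with
  | zero => simp [m]
  | succ k ih =>
    have h1 : m (k + 1) = m k + 4 ^ k := Finset.sum_range_succ _ _
    have h2 : (4 : ℕ) ^ (k + 1) = 4 ^ k * 4 := pow_succ 4 k
    omega

theorem m_pos {k : ℕ} [NeZero k] : 0 < m k := by
  have hk : 0 < k := Nat.pos_of_ne_zero (NeZero.ne k)
  have h1 : 3 * m k + 1 = 4 ^ k := geom k
  have h2 : 1 < 4 ^ k := Nat.one_lt_pow hk.ne' (by norm_num)
  omega

instance {k : ℕ} [NeZero k] : NeZero (m k) := ⟨m_pos.ne'⟩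

instance {k : ℕ} [NeZero k] : NeZero (2 * k) :=
  ⟨by have := NeZero.ne k; omega⟩

/-! ### The concrete group `GK k = ZMod (m k) ⋊ ZMod (2k)` -/

variable (k : ℕ)

theorem two_pow_n [NeZero k] : (2 : ZMod (m k)) ^ (2 * k) = 1 := by
  have h4 : ((4 ^ k : ℕ) : ZMod (m k)) = 1 := by
    rw [← geom k]
    push_cast
    rw [ZMod.natCast_self]
    ring
  calc (2 : ZMod (m k)) ^ (2 * k) = ((2 : ZMod (m k)) ^ 2) ^ k := by rw [← pow_mul]
    _ = ((4 ^ k : ℕ) : ZMod (m k)) := by push_cast; norm_num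
    _ = 1 := h4

/-- The "twisting" factor: `ζ c = 2^c` in `ZMod (m k)`. -/
def zeta (c : ZMod (2 * k)) : ZMod (m k) := 2 ^ c.val

theorem zeta_add [NeZero k] (a b : ZMod (2 * k)) :
    zeta k (a + b) = zeta k a * zeta k b := by
  unfold zeta
  rw [← pow_add, ZMod.val_add, pow_mod_eq (two_pow_n k)]

theorem zeta_zero : zeta k 0 = 1 := by
  simp [zeta]

/-- The underlying type of the semidirect product `ZMod (m k) ⋊ ZMod (2k)`. -/
@[ext]
structure GK where
  x : ZMod (m k)
  c : ZMod (2 * k)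

namespace GK

variable {k}

instance : Mul (GK k) := ⟨fun a b => ⟨a.x + zeta k a.c * b.x, a.c + b.c⟩⟩
instance : One (GK k) := ⟨⟨0, 0⟩⟩
instance : Inv (GK k) := ⟨fun a => ⟨-(zeta k (-a.c) * a.x), -a.c⟩⟩

@[simp] theorem mul_x (a b : GK k) : (a * b).x = a.x + zeta k a.c * b.x := rfl
@[simp] theorem mul_c (a b : GK k) : (a * b).c = a.c + b.c := rfl
@[simp] theorem one_x : (1 : GK k).x = 0 := rfl
@[simp] theorem one_c : (1 : GK k).c = 0 := rfl
@[simp] theorem inv_x (a : GK k) : a⁻¹.x = -(zeta k (-a.c) * a.x) := rfl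
@[simp] theorem inv_c (a : GK k) : a⁻¹.c = -a.c := rfl

instance [NeZero k] : Group (GK k) where
  mul_assoc a b c := by
    ext
    · simp [zeta_add]; ring
    · simp [add_assoc]
  one_mul a := by ext <;> simp [zeta_zero]
  mul_one a := by ext <;> simp
  inv_mul_cancel a := by
    ext
    · simp
    · simp

end GK

/-- `e = (1, 0)`. -/
def eG : GK k := ⟨1, 0⟩
/-- `t = (0, 1)`. -/
def tG : GK k := ⟨0, 1⟩

variable [NeZero k]

/-- `d = e·t⁻²`. -/
def dG : GK k := eG k * ((tG k) ^ 2)⁻¹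

theorem eG_mul_pow (j : ℕ) : (eG k) ^ j = ⟨(j : ZMod (m k)), 0⟩ := by
  induction j with
  | zero => ext <;> simp
  | succ j ih =>
    rw [pow_succ, ih]
    ext
    · simp [eG, zeta_zero]
    · simp [eG]

theorem tG_mul_pow (j : ℕ) : (tG k) ^ j = ⟨0, (j : ZMod (2 * k))⟩ := by
  induction j with
  | zero => ext <;> simp
  | succ j ih =>
    rw [pow_succ, ih]
    ext
    · simp [tG]
    · simp [tG]

theorem val_one_two_k : (1 : ZMod (2 * k)).val = 1 := by
  haveI : Fact (1 < 2 * k) := ⟨by have := Nat.pos_of_ne_zero (NeZero.ne k); omega⟩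
  exact ZMod.val_one (2 * k)

theorem keyG : tG k * eG k * (tG k)⁻¹ = (eG k) ^ 2 := by
  rw [eG_mul_pow]
  ext
  · simp [tG, eG, zeta, val_one_two_k]
  · simp [tG, eG]

theorem heG : eG k = dG k * (tG k) ^ 2 := by
  rw [dG]; group

theorem tG_pow_2k : (tG k) ^ (2 * k) = 1 := by
  rw [tG_mul_pow]
  ext <;> simp

theorem eG_pow_m : (eG k) ^ (m k) = 1 := by
  rw [eG_mul_pow]
  ext <;> simp

theorem dG_pow_k : (dG k) ^ k = 1 := by
  have hR := t_pow_mul_d_pow (heG k) (keyG k) k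
  rw [tG_pow_2k, one_mul] at hR
  rw [hR, ← m, mul_comm 4, pow_mul, eG_pow_m, one_pow]

/-! ### The homomorphism from the presented group -/

/-- Images of the generators. -/
def fG : Fin 2 → GK k := ![dG k, tG k]

theorem hfG : ∀ r ∈ relsDT' k, FreeGroup.lift (fG k) r = 1 := by
  intro r hr
  simp only [relsDT', Set.mem_insert_iff, Set.mem_singleton_iff] at hr
  rcases hr with h | h <;> subst h <;>
    simp only [map_mul, map_pow, map_inv, FreeGroup.lift_apply_of, fG,
      Matrix.cons_val_zero, Matrix.cons_val_one, Matrix.head_cons]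
  · exact dG_pow_k k
  · exact rel_of_key (by rw [← heG]; exact keyG k)

/-- The canonical homomorphism to the concrete group. -/
def homG : PresentedGroup (relsDT' k) →* GK k := PresentedGroup.toGroup (hfG k)

/-! ### Facts inside the presented group -/

/-- `d` in the presented group. -/
def dP : PresentedGroup (relsDT' k) := PresentedGroup.of 0
/-- `t` in the presented group. -/
def tP : PresentedGroup (relsDT' k) := PresentedGroup.of 1
/-- `e = d t²` in the presented group. -/
def eP : PresentedGroup (relsDT' k) := dP k * (tP k) ^ 2

theorem hrel : ∀ r ∈ relsDT' k, PresentedGroup.mk (relsDT' k) r = 1 := fun r hr =>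
  (QuotientGroup.eq_one_iff r).mpr (Subgroup.subset_normalClosure hr)

theorem hr1P : (dP k) ^ k = 1 := by
  have h := hrel k (FreeGroup.of 0 ^ k) (by simp [relsDT'])
  rw [map_pow] at h
  exact h

theorem hr2P :
    (tP k) ^ 2 * dP k * tP k * (dP k)⁻¹ * (tP k)⁻¹ * dP k = 1 := by
  have h := hrel k
      (FreeGroup.of 1 ^ 2 * FreeGroup.of 0 * FreeGroup.of 1 * (FreeGroup.of 0)⁻¹ *
        (FreeGroup.of 1)⁻¹ * FreeGroup.of 0) (by simp [relsDT'])
  simp only [map_mul, map_pow, map_inv] at h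
  exact h

theorem keyP : tP k * eP k * (tP k)⁻¹ = (eP k) ^ 2 :=
  key_of_rel (hr2P k)

theorem ht2k_eq : (tP k) ^ (2 * k) = (eP k) ^ (4 * m k) := by
  have hR := t_pow_mul_d_pow rfl (keyP k) k
  rw [hr1P, mul_one, ← m] at hR
  exact hR

theorem h4m : (eP k) ^ (4 * m k) = 1 := by
  have h1 := t_pow_mul_e_pow (keyP k) 1 (4 * m k)
  simp only [pow_one] at h1
  have h2 : tP k * (eP k) ^ (4 * m k) = (eP k) ^ (4 * m k) * tP k := by
    rw [← ht2k_eq, ← pow_succ', ← pow_succ]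
  rw [h1] at h2
  have h3 := mul_right_cancel h2
  have h4 : (eP k) ^ (4 * m k) * (eP k) ^ (4 * m k) = (eP k) ^ (4 * m k) * 1 := by
    rw [← pow_add, mul_one, show 4 * m k + 4 * m k = 2 * (4 * m k) by ring]
    exact h3
  exact mul_left_cancel h4

theorem ht2k : (tP k) ^ (2 * k) = 1 := (ht2k_eq k).trans (h4m k)

theorem he3m : (eP k) ^ (3 * m k) = 1 := by
  have h1 := t_pow_mul_e_pow (keyP k) (2 * k) 1
  simp only [ht2k, one_mul, mul_one, pow_one] at h1
  have h2 : (2 : ℕ) ^ (2 * k) = 3 * m k + 1 := by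
    rw [geom k, pow_mul]; norm_num
  rw [h2, pow_add, pow_one] at h1
  have h3 : (eP k) ^ (3 * m k) * eP k = 1 * eP k := by rw [one_mul, ← h1]
  exact mul_right_cancel h3

theorem hem : (eP k) ^ (m k) = 1 := by
  have h1 : (eP k) ^ (3 * m k) * (eP k) ^ (m k) = 1 := by
    rw [← pow_add, show 3 * m k + m k = 4 * m k by ring]
    exact h4m k
  rw [he3m, one_mul] at h1
  exact h1

/-! ### The inverse map -/

/-- The inverse map. -/
def psi (a : GK k) : PresentedGroup (relsDT' k) :=
  (eP k) ^ a.x.val * (tP k) ^ a.c.val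

theorem eP_pow_val_add (u v : ZMod (m k)) :
    (eP k) ^ (u + v).val = (eP k) ^ u.val * (eP k) ^ v.val := by
  rw [ZMod.val_add, pow_mod_eq (hem k), pow_add]

theorem tP_pow_val_add (u v : ZMod (2 * k)) :
    (tP k) ^ (u + v).val = (tP k) ^ u.val * (tP k) ^ v.val := by
  rw [ZMod.val_add, pow_mod_eq (ht2k k), pow_add]

theorem psi_mul (a b : GK k) : psi k (a * b) = psi k a * psi k b := by
  have hz : (eP k) ^ (zeta k a.c * b.x).val = (eP k) ^ (2 ^ a.c.val * b.x.val) := by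
    have h1 : zeta k a.c * b.x = ((2 ^ a.c.val * b.x.val : ℕ) : ZMod (m k)) := by
      unfold zeta
      push_cast
      rw [ZMod.natCast_rightInverse b.x]
    rw [h1, ZMod.val_natCast, pow_mod_eq (hem k)]
  calc psi k (a * b)
      = (eP k) ^ (a.x + zeta k a.c * b.x).val * (tP k) ^ (a.c + b.c).val := rfl
    _ = ((eP k) ^ a.x.val * (eP k) ^ (zeta k a.c * b.x).val) *
        ((tP k) ^ a.c.val * (tP k) ^ b.c.val) := by
        rw [eP_pow_val_add, tP_pow_val_add]
    _ = (eP k) ^ a.x.val * ((eP k) ^ (2 ^ a.c.val * b.x.val) * (tP k) ^ a.c.val) *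
        (tP k) ^ b.c.val := by rw [hz]; group
    _ = (eP k) ^ a.x.val * ((tP k) ^ a.c.val * (eP k) ^ b.x.val) *
        (tP k) ^ b.c.val := by rw [← t_pow_mul_e_pow (keyP k)]
    _ = psi k a * psi k b := by unfold psi; group

/-- `psi` as a homomorphism. -/
def psiHom : GK k →* PresentedGroup (relsDT' k) :=
  MonoidHom.mk' (psi k) (psi_mul k)

theorem dG_eq : dG k = ⟨1, -2⟩ := by
  have h2 : (tG k) ^ 2 = (⟨0, (2 : ZMod (2 * k))⟩ : GK k) := by
    rw [tG_mul_pow]; norm_num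
  rw [dG, h2]
  ext
  · simp [eG, zeta_zero]
  · simp [eG]

theorem psi_dG : psi k (dG k) = dP k := by
  rw [dG_eq]
  show (eP k) ^ (1 : ZMod (m k)).val * (tP k) ^ (-2 : ZMod (2 * k)).val = dP k
  have he1 : (eP k) ^ (1 : ZMod (m k)).val = eP k := by
    rw [ZMod.val_one_eq_one_mod, pow_mod_eq (hem k), pow_one]
  have hv : (tP k) ^ (-2 : ZMod (2 * k)).val = ((tP k) ^ 2)⁻¹ := by
    set v := (-2 : ZMod (2 * k)).val with hvdef
    have hdvd : (2 * k) ∣ (v + 2) := by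
      have h0 : ((v + 2 : ℕ) : ZMod (2 * k)) = 0 := by
        push_cast
        rw [hvdef, ZMod.natCast_rightInverse (-2 : ZMod (2 * k))]
        ring
      exact (ZMod.natCast_eq_zero_iff _ _).mp h0
    have h1 : (tP k) ^ v * (tP k) ^ 2 = 1 := by
      obtain ⟨c, hc⟩ := hdvd
      rw [← pow_add, hc, pow_mul, ht2k, one_pow]
    exact eq_inv_of_mul_eq_one_left (by rw [← h1])
  rw [he1, hv, eP]
  group

theorem psi_tG : psi k (tG k) = tP k := by
  show (eP k) ^ (0 : ZMod (m k)).val * (tP k) ^ (1 : ZMod (2 * k)).val = tP k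
  rw [ZMod.val_zero, pow_zero, one_mul, val_one_two_k, pow_one]

theorem homG_dP : homG k (dP k) = dG k := by
  unfold homG dP
  rw [PresentedGroup.toGroup.of]
  simp [fG]

theorem homG_tP : homG k (tP k) = tG k := by
  unfold homG tP
  rw [PresentedGroup.toGroup.of]
  simp [fG]

theorem homG_eP : homG k (eP k) = eG k := by
  rw [eP, map_mul, map_pow, homG_dP, homG_tP, ← heG]

theorem left_inv (p : PresentedGroup (relsDT' k)) : psi k (homG k p) = p := by
  have h : (psiHom k).comp (homG k) = MonoidHom.id _ := by
    apply PresentedGroup.ext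
    intro i
    fin_cases i
    · show psiHom k (homG k (dP k)) = dP k
      rw [homG_dP]
      exact psi_dG k
    · show psiHom k (homG k (tP k)) = tP k
      rw [homG_tP]
      exact psi_tG k
  exact DFunLike.congr_fun h p

theorem right_inv (a : GK k) : homG k (psi k a) = a := by
  show homG k ((eP k) ^ a.x.val * (tP k) ^ a.c.val) = a
  rw [map_mul, map_pow, map_pow, homG_eP, homG_tP, eG_mul_pow, tG_mul_pow]
  ext
  · simpa using ZMod.natCast_rightInverse a.x
  · simpa using ZMod.natCast_rightInverse a.c

/-- The main equivalence. -/
def mainEquiv : PresentedGroup (relsDT' k) ≃ GK k :=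
  ⟨homG k, psi k, left_inv k, right_inv k⟩

/-- `GK k` as a product type. -/
def gkEquiv : GK k ≃ ZMod (m k) × ZMod (2 * k) :=
  ⟨fun a => (a.x, a.c), fun p => ⟨p.1, p.2⟩, fun _ => rfl, fun _ => rfl⟩

instance : Finite (GK k) := Finite.of_equiv _ (gkEquiv k).symm

end CardDT

theorem card_presentedGroup_relsDT' (k : ℕ) (hk : 1 ≤ k) :
    Finite (PresentedGroup (relsDT' k)) ∧
      Nat.card (PresentedGroup (relsDT' k)) =
        2 * k * ∑ i ∈ Finset.range k, 4 ^ i := by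
  haveI : NeZero k := ⟨by omega⟩
  refine ⟨Finite.of_equiv _ (CardDT.mainEquiv k).symm, ?_⟩
  rw [Nat.card_congr (CardDT.mainEquiv k), Nat.card_congr (CardDT.gkEquiv k),
    Nat.card_prod, Nat.card_zmod, Nat.card_zmod]
  show CardDT.m k * (2 * k) = 2 * k * ∑ i ∈ Finset.range k, 4 ^ i
  rw [CardDT.m, mul_comm]
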